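/- Let (M⁴, g, f) be a four-dimensional gradient Ricci soliton (Ric + ∇²f = λ g for some constant λ). There exists a universal positive constant A₀ (independent of the soliton) such that at any point q ∈ M where ∇f ≠ 0, one has |Rm|(q) ≤ A₀ ( |Ric|(q) + |∇Ric|(q)/|∇f|(q) ). -/

import Mathlib

open Finset

lemma MW_rot3 (f : Fin 4 → Fin 4 → Fin 4 → ℝ) :
    ∑ a, ∑ b, ∑ c, f a b c = ∑ c, ∑ a, ∑ b, f a b c := by
  rw [show (∑ a, ∑ b, ∑ c, f a b c) = ∑ a, ∑ c, ∑ b, f a b c from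
    Finset.sum_congr rfl fun a _ => Finset.sum_comm]
  exact Finset.sum_comm

lemma MW_rot4 (f : Fin 4 → Fin 4 → Fin 4 → Fin 4 → ℝ) :
    ∑ a, ∑ b, ∑ c, ∑ d, f a b c d = ∑ d, ∑ a, ∑ b, ∑ c, f a b c d := by
  rw [show (∑ a, ∑ b, ∑ c, ∑ d, f a b c d) = ∑ a, ∑ d, ∑ b, ∑ c, f a b c d from
    Finset.sum_congr rfl fun a _ => MW_rot3 _]
  exact Finset.sum_comm

lemma MW_pull2 (g : Fin 4 → Fin 4 → ℝ) (w : ℝ) :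
    ∑ p, ∑ q, g p q * w = (∑ p, ∑ q, g p q) * w := by
  rw [Finset.sum_mul]
  exact Finset.sum_congr rfl fun p _ => (Finset.sum_mul _ _ _).symm

lemma MW_pull3 (g : Fin 4 → Fin 4 → Fin 4 → ℝ) (w : ℝ) :
    ∑ p, ∑ q, ∑ r, g p q r * w = (∑ p, ∑ q, ∑ r, g p q r) * w := by
  rw [Finset.sum_mul]
  exact Finset.sum_congr rfl fun p _ => MW_pull2 _ _

lemma MW_col1 {O : Fin 4 → Fin 4 → ℝ}
    (hcol : ∀ p q, (∑ i, O i p * O i q) = if p = q then (1:ℝ) else 0)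
    (x : Fin 4 → ℝ) :
    (∑ i, (∑ p, x p * O i p)^2) = ∑ p, x p ^ 2 := by
  have h : ∀ i : Fin 4, (∑ p, x p * O i p)^2 = ∑ p, ∑ q, (x p * x q) * (O i p * O i q) := by
    intro i
    rw [sq, Finset.sum_mul_sum]
    exact Finset.sum_congr rfl fun p _ => Finset.sum_congr rfl fun q _ => by ring
  simp only [h]
  rw [Finset.sum_comm]
  have h2 : ∀ p : Fin 4, (∑ i, ∑ q, (x p * x q) * (O i p * O i q))
      = ∑ q, (x p * x q) * (∑ i, O i p * O i q) := by
    intro p; rw [Finset.sum_comm]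
    exact Finset.sum_congr rfl fun q _ => (Finset.mul_sum _ _ _).symm
  simp only [h2, hcol, mul_ite, mul_one, mul_zero]
  simp [sq]

lemma MW_col2 {O : Fin 4 → Fin 4 → ℝ}
    (hcol : ∀ p q, (∑ i, O i p * O i q) = if p = q then (1:ℝ) else 0)
    (x : Fin 4 → Fin 4 → ℝ) :
    (∑ i, ∑ j, (∑ p, ∑ q, x p q * O i p * O j q)^2) = ∑ p, ∑ q, x p q ^ 2 := by
  have hre : ∀ i j : Fin 4, (∑ p, ∑ q, x p q * O i p * O j q)
      = ∑ q, (∑ p, x p q * O i p) * O j q := by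
    intro i j; rw [Finset.sum_comm]
    refine Finset.sum_congr rfl fun q _ => ?_
    rw [Finset.sum_mul]
  simp only [hre]
  have h1 : ∀ i : Fin 4, (∑ j, (∑ q, (∑ p, x p q * O i p) * O j q)^2)
      = ∑ q, (∑ p, x p q * O i p)^2 := fun i => MW_col1 hcol _
  simp only [h1]
  exact Finset.sum_comm.trans ((Finset.sum_congr rfl fun q _ =>
    MW_col1 hcol fun p => x p q).trans Finset.sum_comm)

lemma MW_col3 {O : Fin 4 → Fin 4 → ℝ}
    (hcol : ∀ p q, (∑ i, O i p * O i q) = if p = q then (1:ℝ) else 0)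
    (x : Fin 4 → Fin 4 → Fin 4 → ℝ) :
    (∑ i, ∑ j, ∑ k, (∑ p, ∑ q, ∑ r, x p q r * O i p * O j q * O k r)^2)
      = ∑ p, ∑ q, ∑ r, x p q r ^ 2 := by
  have hre : ∀ i j k : Fin 4, (∑ p, ∑ q, ∑ r, x p q r * O i p * O j q * O k r)
      = ∑ r, (∑ p, ∑ q, x p q r * O i p * O j q) * O k r := by
    intro i j k
    rw [MW_rot3]
    refine Finset.sum_congr rfl fun r _ => ?_
    rw [← MW_pull2]
  simp only [hre]
  have h1 : ∀ i j : Fin 4, (∑ k, (∑ r, (∑ p, ∑ q, x p q r * O i p * O j q) * O k r)^2)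
      = ∑ r, (∑ p, ∑ q, x p q r * O i p * O j q)^2 := fun i j => MW_col1 hcol _
  simp only [h1]
  rw [MW_rot3]
  have h3 : ∀ r : Fin 4, (∑ i, ∑ j, (∑ p, ∑ q, x p q r * O i p * O j q)^2)
      = ∑ p, ∑ q, x p q r ^ 2 := fun r => MW_col2 hcol _
  simp only [h3]
  exact (MW_rot3 _).symm

lemma MW_col4 {O : Fin 4 → Fin 4 → ℝ}
    (hcol : ∀ p q, (∑ i, O i p * O i q) = if p = q then (1:ℝ) else 0)
    (x : Fin 4 → Fin 4 → Fin 4 → Fin 4 → ℝ) :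
    (∑ i, ∑ j, ∑ k, ∑ l, (∑ p, ∑ q, ∑ r, ∑ s, x p q r s * O i p * O j q * O k r * O l s)^2)
      = ∑ p, ∑ q, ∑ r, ∑ s, x p q r s ^ 2 := by
  have hre : ∀ i j k l : Fin 4,
      (∑ p, ∑ q, ∑ r, ∑ s, x p q r s * O i p * O j q * O k r * O l s)
      = ∑ s, (∑ p, ∑ q, ∑ r, x p q r s * O i p * O j q * O k r) * O l s := by
    intro i j k l
    rw [MW_rot4]
    refine Finset.sum_congr rfl fun s _ => ?_
    rw [← MW_pull3]
  simp only [hre]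
  have h1 : ∀ i j k : Fin 4,
      (∑ l, (∑ s, (∑ p, ∑ q, ∑ r, x p q r s * O i p * O j q * O k r) * O l s)^2)
      = ∑ s, (∑ p, ∑ q, ∑ r, x p q r s * O i p * O j q * O k r)^2 := fun i j k => MW_col1 hcol _
  simp only [h1]
  rw [MW_rot4]
  have h3 : ∀ s : Fin 4, (∑ i, ∑ j, ∑ k, (∑ p, ∑ q, ∑ r, x p q r s * O i p * O j q * O k r)^2)
      = ∑ p, ∑ q, ∑ r, x p q r s ^ 2 := fun s => MW_col3 hcol _
  simp only [h3]
  exact (MW_rot4 _).symm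

section MWaux
open Matrix

noncomputable def MWT (O : Fin 4 → Fin 4 → ℝ) (Rm : Fin 4 → Fin 4 → Fin 4 → Fin 4 → ℝ)
    (i j k l : Fin 4) : ℝ :=
  ∑ p, ∑ q, ∑ r, ∑ s, Rm p q r s * O i p * O j q * O k r * O l s

noncomputable def MWD (O : Fin 4 → Fin 4 → ℝ) (D : Fin 4 → Fin 4 → Fin 4 → ℝ)
    (i k l : Fin 4) : ℝ :=
  ∑ p, ∑ r, ∑ s, D p r s * O i p * O k r * O l s

lemma MWT_sym1 {O Rm} (h : ∀ i j k l, Rm i j k l = -Rm j i k l) (i j k l : Fin 4) :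
    MWT O Rm i j k l = -MWT O Rm j i k l := by
  have e1 : MWT O Rm j i k l
      = ∑ p, ∑ q, ∑ r, ∑ s, Rm q p r s * O i p * O j q * O k r * O l s := by
    unfold MWT
    refine Finset.sum_comm.trans ?_
    exact Finset.sum_congr rfl fun p _ => Finset.sum_congr rfl fun q _ =>
      Finset.sum_congr rfl fun r _ => Finset.sum_congr rfl fun s _ => by ring
  refine eq_neg_of_add_eq_zero_left ?_
  rw [e1]; unfold MWT
  rw [← Finset.sum_add_distrib]
  refine Finset.sum_eq_zero fun p _ => ?_
  rw [← Finset.sum_add_distrib]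
  refine Finset.sum_eq_zero fun q _ => ?_
  rw [← Finset.sum_add_distrib]
  refine Finset.sum_eq_zero fun r _ => ?_
  rw [← Finset.sum_add_distrib]
  refine Finset.sum_eq_zero fun s _ => ?_
  rw [h p q r s]; ring

lemma MWT_sym2 {O Rm} (h : ∀ i j k l, Rm i j k l = -Rm i j l k) (i j k l : Fin 4) :
    MWT O Rm i j k l = -MWT O Rm i j l k := by
  have e1 : MWT O Rm i j l k
      = ∑ p, ∑ q, ∑ r, ∑ s, Rm p q s r * O i p * O j q * O k r * O l s := by
    unfold MWT
    refine Finset.sum_congr rfl fun p _ => Finset.sum_congr rfl fun q _ => ?_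
    refine Finset.sum_comm.trans ?_
    exact Finset.sum_congr rfl fun r _ => Finset.sum_congr rfl fun s _ => by ring
  refine eq_neg_of_add_eq_zero_left ?_
  rw [e1]; unfold MWT
  rw [← Finset.sum_add_distrib]
  refine Finset.sum_eq_zero fun p _ => ?_
  rw [← Finset.sum_add_distrib]
  refine Finset.sum_eq_zero fun q _ => ?_
  rw [← Finset.sum_add_distrib]
  refine Finset.sum_eq_zero fun r _ => ?_
  rw [← Finset.sum_add_distrib]
  refine Finset.sum_eq_zero fun s _ => ?_
  rw [h p q r s]; ring

lemma MWT_sym3 {O Rm} (h : ∀ i j k l, Rm i j k l = Rm k l i j) (i j k l : Fin 4) :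
    MWT O Rm i j k l = MWT O Rm k l i j := by
  have e1 : MWT O Rm k l i j
      = ∑ p, ∑ q, ∑ r, ∑ s, Rm r s p q * O i p * O j q * O k r * O l s := by
    unfold MWT
    refine ((MW_rot4 _).trans (MW_rot4 _)).symm.trans ?_
    exact Finset.sum_congr rfl fun p _ => Finset.sum_congr rfl fun q _ =>
      Finset.sum_congr rfl fun r _ => Finset.sum_congr rfl fun s _ => by ring
  rw [e1]
  unfold MWT
  exact Finset.sum_congr rfl fun p _ => Finset.sum_congr rfl fun q _ =>
    Finset.sum_congr rfl fun r _ => Finset.sum_congr rfl fun s _ => by rw [h p q r s]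

lemma MW_contr {O : Fin 4 → Fin 4 → ℝ} {Rm : Fin 4 → Fin 4 → Fin 4 → Fin 4 → ℝ}
    (hcol : ∀ p q, (∑ i, O i p * O i q) = if p = q then (1:ℝ) else 0) (i j : Fin 4) :
    (∑ k, MWT O Rm i k k j) = ∑ p, ∑ s, (∑ q, Rm p q q s) * O i p * O j s := by
  unfold MWT
  rw [Finset.sum_comm]
  have h1 : ∀ p, (∑ k, ∑ q, ∑ r, ∑ s, Rm p q r s * O i p * O k q * O k r * O j s)
      = ∑ q, ∑ s, Rm p q q s * O i p * O j s := by
    intro p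
    rw [Finset.sum_comm]
    refine Finset.sum_congr rfl fun q _ => ?_
    rw [Finset.sum_comm]
    have h3 : ∀ r, (∑ k, ∑ s, Rm p q r s * O i p * O k q * O k r * O j s)
        = ∑ s, Rm p q r s * O i p * O j s * (if q = r then 1 else 0) := by
      intro r
      rw [Finset.sum_comm]
      refine Finset.sum_congr rfl fun s _ => ?_
      rw [← hcol q r, Finset.mul_sum]
      exact Finset.sum_congr rfl fun k _ => by ring
    simp only [h3]
    rw [Finset.sum_comm]
    refine Finset.sum_congr rfl fun s _ => ?_
    simp [mul_ite]
  simp only [h1]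
  refine Finset.sum_congr rfl fun p _ => ?_
  rw [Finset.sum_comm]
  refine Finset.sum_congr rfl fun s _ => ?_
  rw [Finset.sum_mul, Finset.sum_mul]

lemma MW_sol {O : Fin 4 → Fin 4 → ℝ} {Rm : Fin 4 → Fin 4 → Fin 4 → Fin 4 → ℝ}
    {DRic : Fin 4 → Fin 4 → Fin 4 → ℝ} {gf : Fin 4 → ℝ} {c : ℝ} (hc : c ≠ 0)
    (hO0 : ∀ s, O 0 s = gf s / c)
    (hId : ∀ i k l, DRic i k l - DRic l k i = ∑ j, Rm i l k j * gf j) (i k l : Fin 4) :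
    MWD O DRic i k l - MWD O DRic l k i = c * MWT O Rm i l k 0 := by
  have step1 : c * MWT O Rm i l k 0
      = ∑ p, ∑ q, ∑ r, (DRic p r q - DRic q r p) * (O i p * O l q * O k r) := by
    unfold MWT
    rw [Finset.mul_sum]
    refine Finset.sum_congr rfl fun p _ => ?_
    rw [Finset.mul_sum]
    refine Finset.sum_congr rfl fun q _ => ?_
    rw [Finset.mul_sum]
    refine Finset.sum_congr rfl fun r _ => ?_
    rw [hId p r q, Finset.sum_mul, Finset.mul_sum]
    refine Finset.sum_congr rfl fun s _ => ?_
    rw [hO0 s]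
    field_simp
  have step2 : (∑ p, ∑ q, ∑ r, DRic p r q * (O i p * O l q * O k r)) = MWD O DRic i k l := by
    unfold MWD
    refine Finset.sum_congr rfl fun p _ => ?_
    refine Finset.sum_comm.trans ?_
    exact Finset.sum_congr rfl fun r _ => Finset.sum_congr rfl fun q _ => by ring
  have step3 : (∑ p, ∑ q, ∑ r, DRic q r p * (O i p * O l q * O k r)) = MWD O DRic l k i := by
    unfold MWD
    refine ((MW_rot3 fun q r p => DRic q r p * (O i p * O l q * O k r)).symm).trans ?_
    exact Finset.sum_congr rfl fun q _ => Finset.sum_congr rfl fun r _ =>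
      Finset.sum_congr rfl fun p _ => by ring
  rw [step1, ← step2, ← step3, ← Finset.sum_sub_distrib]
  refine Finset.sum_congr rfl fun p _ => ?_
  rw [← Finset.sum_sub_distrib]
  refine Finset.sum_congr rfl fun q _ => ?_
  rw [← Finset.sum_sub_distrib]
  exact Finset.sum_congr rfl fun r _ => by ring

lemma MW_frame (gf : Fin 4 → ℝ) (hgf : gf ≠ 0) :
    ∃ O : Fin 4 → Fin 4 → ℝ,
      (∀ i j, (∑ p, O i p * O j p) = if i = j then (1:ℝ) else 0) ∧
      (∀ p q, (∑ i, O i p * O i q) = if p = q then (1:ℝ) else 0) ∧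
      (∀ s, O 0 s = gf s / Real.sqrt (∑ j, gf j ^ 2)) := by
  set c : ℝ := Real.sqrt (∑ j, gf j ^ 2) with hcdef
  have hsum : 0 < ∑ j, gf j ^ 2 := by
    obtain ⟨j, hj⟩ := Function.ne_iff.mp hgf
    refine Finset.sum_pos' (fun i _ => sq_nonneg _) ⟨j, Finset.mem_univ j, ?_⟩
    exact pow_two_pos_of_ne_zero hj
  have hc : 0 < c := Real.sqrt_pos.mpr hsum
  have hc2 : c ^ 2 = ∑ j, gf j ^ 2 := Real.sq_sqrt hsum.le
  set V : EuclideanSpace ℝ (Fin 4) := WithLp.toLp 2 (fun s => gf s / c) with hVdef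
  have hVV : (inner ℝ V V : ℝ) = 1 := by
    simp only [PiLp.inner_apply, RCLike.inner_apply, conj_trivial]
    have : ∀ s : Fin 4, V s * V s = gf s ^ 2 / c ^ 2 := by
      intro s; simp only [hVdef, PiLp.toLp_apply]; ring
    simp only [this, ← Finset.sum_div, ← hc2]
    field_simp
  have horth : Orthonormal ℝ (({0} : Set (Fin 4)).restrict (fun _ => V)) := by
    rw [orthonormal_iff_ite]
    intro x y
    have hxy : x = y := Subtype.ext (by
      have hx := x.2; have hy := y.2
      simp only [Set.mem_singleton_iff] at hx hy
      rw [hx, hy])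
    subst hxy
    simp [Set.restrict, hVV]
    left; have := real_inner_self_eq_norm_sq V; nlinarith [norm_nonneg V]
  obtain ⟨b, hb⟩ := Orthonormal.exists_orthonormalBasis_extension_of_card_eq
    (by simp) horth
  have hb0 : b 0 = V := hb 0 rfl
  refine ⟨fun i p => b i p, ?_, ?_, ?_⟩
  · intro i j
    have := orthonormal_iff_ite.mp b.orthonormal i j
    simp only [PiLp.inner_apply, RCLike.inner_apply, conj_trivial] at this
    rw [← this]; exact Finset.sum_congr rfl fun _ _ => mul_comm _ _
  · intro p q
    have hrow : ∀ i j, (∑ p, b i p * b j p) = if i = j then (1:ℝ) else 0 := by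
      intro i j
      have := orthonormal_iff_ite.mp b.orthonormal i j
      simp only [PiLp.inner_apply, RCLike.inner_apply, conj_trivial] at this
      rw [← this]; exact Finset.sum_congr rfl fun _ _ => mul_comm _ _
    set M : Matrix (Fin 4) (Fin 4) ℝ := Matrix.of (fun i p => b i p) with hM
    have h1 : M * Mᵀ = 1 := by
      ext i j
      simp only [Matrix.mul_apply, Matrix.transpose_apply, Matrix.one_apply, hM, Matrix.of_apply]
      exact hrow i j
    have h2 : Mᵀ * M = 1 := mul_eq_one_comm.mp h1
    have := congrFun (congrFun h2 p) q
    simp only [Matrix.mul_apply, Matrix.transpose_apply, Matrix.one_apply, hM,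
      Matrix.of_apply] at this
    exact this
  · intro s
    show b 0 s = gf s / c
    rw [hb0]

end MWaux


/-!
**Lemma 1 (Munteanu–Wang).**  On a four-dimensional gradient Ricci soliton
`Ric + ∇²f = λ g`, there is a universal constant `A₀ > 0` (independent of the
soliton) such that `|Rm| ≤ A₀ (|Ric| + |∇Ric|/|∇f|)` at every point where
`∇f ≠ 0`.

Mathlib has no Riemann curvature tensor, so we formalize the statement through
the pointwise data of the soliton at a point `q`, expressed in an arbitrary
orthonormal frame: the components `Rm i j k l = R_{ijkl}` of the curvature
tensor (with its algebraic symmetries), the components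
`DRic i k l = R_{kl,i} = (∇Ric)` of the covariant derivative of the Ricci
tensor, and the components `gf j = f_j` of `∇f`.  On a gradient Ricci soliton
these satisfy the identity `R_{kl,i} - R_{ki,l} = R_{ilkj} f_j` (for any `λ`),
and conversely this identity together with the curvature symmetries is all that
the estimate uses.  The Ricci components are `R_{ij} = Σ_k R_{ikkj}`, and the
norms are the frame norms of the corresponding tensors.
-/
theorem dim4_gradient_soliton_Rm_le_Ric_add_gradRic :
    ∃ A₀ : ℝ, 0 < A₀ ∧
      ∀ (Rm : Fin 4 → Fin 4 → Fin 4 → Fin 4 → ℝ)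
        (DRic : Fin 4 → Fin 4 → Fin 4 → ℝ) (gf : Fin 4 → ℝ),
        (∀ i j k l, Rm i j k l = -Rm j i k l) →
        (∀ i j k l, Rm i j k l = -Rm i j l k) →
        (∀ i j k l, Rm i j k l = Rm k l i j) →
        (∀ i j k l, Rm i j k l + Rm j k i l + Rm k i j l = 0) →
        -- the gradient Ricci soliton identity `R_{kl,i} - R_{ki,l} = R_{ilkj} f_j`
        (∀ i k l, DRic i k l - DRic l k i = ∑ j, Rm i l k j * gf j) →
        gf ≠ 0 →
        Real.sqrt (∑ i, ∑ j, ∑ k, ∑ l, Rm i j k l ^ 2) ≤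
          A₀ * (Real.sqrt (∑ i, ∑ j, (∑ k, Rm i k k j) ^ 2) +
            Real.sqrt (∑ i, ∑ k, ∑ l, DRic i k l ^ 2) /
              Real.sqrt (∑ j, gf j ^ 2)) := by
  refine ⟨96, by norm_num, ?_⟩
  intro Rm DRic gf h1 h2 h3 _hB hId hgf
  obtain ⟨O, hrow, hcol, hO0⟩ := MW_frame gf hgf
  set c : ℝ := Real.sqrt (∑ j, gf j ^ 2) with hcdef
  have hsum : 0 < ∑ j, gf j ^ 2 := by
    obtain ⟨j, hj⟩ := Function.ne_iff.mp hgf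
    refine Finset.sum_pos' (fun i _ => sq_nonneg _) ⟨j, Finset.mem_univ j, ?_⟩
    exact pow_two_pos_of_ne_zero hj
  have hc : 0 < c := Real.sqrt_pos.mpr hsum
  set NR : ℝ := Real.sqrt (∑ i, ∑ j, (∑ k, Rm i k k j) ^ 2) with hNRdef
  set ND : ℝ := Real.sqrt (∑ i, ∑ k, ∑ l, DRic i k l ^ 2) with hNDdef
  have hNRnn : 0 ≤ NR := Real.sqrt_nonneg _
  have hNDnn : 0 ≤ ND := Real.sqrt_nonneg _
  set β : ℝ := ND / c with hβdef
  have hβnn : 0 ≤ β := div_nonneg hNDnn hc.le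
  obtain ⟨R, hRdef⟩ : ∃ R' : Fin 4 → Fin 4 → Fin 4 → Fin 4 → ℝ, R' = MWT O Rm := ⟨_, rfl⟩
  obtain ⟨D, hDdef⟩ : ∃ D' : Fin 4 → Fin 4 → Fin 4 → ℝ, D' = MWD O DRic := ⟨_, rfl⟩
  have habs_of_sq : ∀ x S : ℝ, x ^ 2 ≤ S → |x| ≤ Real.sqrt S := by
    intro x S h
    rw [← Real.sqrt_sq_eq_abs]
    exact Real.sqrt_le_sqrt h
  -- bound on components of D
  have hDnorm : (∑ i, ∑ k, ∑ l, D i k l ^ 2) = ∑ i, ∑ k, ∑ l, DRic i k l ^ 2 := by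
    simp only [hDdef]
    exact MW_col3 hcol DRic
  have hDcomp : ∀ i k l, |D i k l| ≤ ND := by
    intro i k l
    have t1 : D i k l ^ 2 ≤ ∑ l', D i k l' ^ 2 :=
      Finset.single_le_sum (f := fun l' => D i k l' ^ 2) (fun _ _ => sq_nonneg _)
        (Finset.mem_univ l)
    have t2 : (∑ l', D i k l' ^ 2) ≤ ∑ k', ∑ l', D i k' l' ^ 2 :=
      Finset.single_le_sum (f := fun k' => ∑ l', D i k' l' ^ 2)
        (fun _ _ => Finset.sum_nonneg fun _ _ => sq_nonneg _) (Finset.mem_univ k)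
    have t3 : (∑ k', ∑ l', D i k' l' ^ 2) ≤ ∑ i', ∑ k', ∑ l', D i' k' l' ^ 2 :=
      Finset.single_le_sum (f := fun i' => ∑ k', ∑ l', D i' k' l' ^ 2)
        (fun _ _ => Finset.sum_nonneg fun _ _ => Finset.sum_nonneg fun _ _ => sq_nonneg _)
        (Finset.mem_univ i)
    rw [hNDdef]
    exact habs_of_sq _ _ (by rw [← hDnorm]; linarith)
  -- Ricci of R equals the transform of the Ricci of Rm
  have hcontr : ∀ i j, (∑ k, R i k k j) = ∑ p, ∑ s, (∑ q, Rm p q q s) * O i p * O j s := by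
    simp only [hRdef]
    exact fun i j => MW_contr hcol i j
  have hEnorm : (∑ i, ∑ j, (∑ k, R i k k j) ^ 2) = ∑ i, ∑ j, (∑ k, Rm i k k j) ^ 2 := by
    simp only [hcontr]
    exact MW_col2 hcol (fun p s => ∑ q, Rm p q q s)
  have hE : ∀ i j, |∑ k, R i k k j| ≤ NR := by
    intro i j
    have t1 : (∑ k, R i k k j) ^ 2 ≤ ∑ j', (∑ k, R i k k j') ^ 2 :=
      Finset.single_le_sum (f := fun j' => (∑ k, R i k k j') ^ 2) (fun _ _ => sq_nonneg _)
        (Finset.mem_univ j)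
    have t2 : (∑ j', (∑ k, R i k k j') ^ 2) ≤ ∑ i', ∑ j', (∑ k, R i' k k j') ^ 2 :=
      Finset.single_le_sum (f := fun i' => ∑ j', (∑ k, R i' k k j') ^ 2)
        (fun _ _ => Finset.sum_nonneg fun _ _ => sq_nonneg _) (Finset.mem_univ i)
    rw [hNRdef]
    exact habs_of_sq _ _ (by rw [← hEnorm]; linarith)
  -- soliton identity
  have hzb : ∀ a b e : Fin 4, |R a b e 0| ≤ 2 * β := by
    intro a b e
    have key : D a e b - D b e a = c * R a b e 0 := by
      rw [hRdef, hDdef]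
      exact MW_sol hc.ne' hO0 hId a e b
    have hrw : R a b e 0 = (D a e b - D b e a) / c := by
      rw [key, mul_div_cancel_left₀ _ hc.ne']
    rw [hrw, abs_div, abs_of_pos hc, hβdef]
    rw [show 2 * (ND / c) = 2 * ND / c by ring]
    have htri : |D a e b - D b e a| ≤ 2 * ND := by
      calc |D a e b - D b e a| ≤ |D a e b| + |D b e a| := abs_sub _ _
        _ ≤ 2 * ND := by linarith [hDcomp a e b, hDcomp b e a]
    gcongr
  -- symmetries
  have hR1 : ∀ i j k l, R i j k l = -R j i k l := by
    simp only [hRdef]; exact MWT_sym1 h1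
  have hR2 : ∀ i j k l, R i j k l = -R i j l k := by
    simp only [hRdef]; exact MWT_sym2 h2
  have hR3 : ∀ i j k l, R i j k l = R k l i j := by
    simp only [hRdef]; exact MWT_sym3 h3
  have habs1 : ∀ i j k l, |R i j k l| = |R j i k l| := by
    intro i j k l; rw [hR1 i j k l, abs_neg]
  have habs2 : ∀ i j k l, |R i j k l| = |R i j l k| := by
    intro i j k l; rw [hR2 i j k l, abs_neg]
  have habs3 : ∀ i j k l, |R i j k l| = |R k l i j| := by
    intro i j k l; rw [hR3 i j k l]
  have hzd1 : ∀ i k l, R i i k l = 0 := by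
    intro i k l; have := hR1 i i k l; linarith
  have hzd2 : ∀ i j k, R i j k k = 0 := by
    intro i j k; have := hR2 i j k k; linarith
  set K : ℝ := 3 * NR + 6 * β with hKdef
  have hKnn : 0 ≤ K := by rw [hKdef]; linarith
  have hdiag1 : ∀ i k l, |R i i k l| ≤ K := by
    intro i k l; rw [hzd1, abs_zero]; exact hKnn
  have hdiag2 : ∀ i j k, |R i j k k| ≤ K := by
    intro i j k; rw [hzd2, abs_zero]; exact hKnn
  have h2β : ∀ x : ℝ, |x| ≤ 2 * β → |x| ≤ K := by
    intro x hx; refine hx.trans ?_; rw [hKdef]; linarith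
  have hz0 : ∀ i j k l : Fin 4, i = 0 ∨ j = 0 ∨ k = 0 ∨ l = 0 → |R i j k l| ≤ K := by
    intro i j k l h
    rcases h with rfl | rfl | rfl | rfl
    · rw [habs3, habs2]; exact h2β _ (hzb k l j)
    · rw [habs1, habs3, habs2]; exact h2β _ (hzb k l i)
    · rw [habs2]; exact h2β _ (hzb i j l)
    · exact h2β _ (hzb i j k)
  have hRa00b : ∀ a b, |R a 0 0 b| ≤ 2 * β := by
    intro a b; rw [habs3]; exact hzb 0 b a
  have hEexp : ∀ a b, (∑ k, R a k k b) = R a 0 0 b + R a 1 1 b + R a 2 2 b + R a 3 3 b :=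
    fun a b => Fin.sum_univ_four _
  -- sectional-type bounds
  have e11 : (∑ k, R 1 k k 1) = R 1 0 0 1 + R 1 2 2 1 + R 1 3 3 1 := by
    rw [hEexp, hzd1]; ring
  have e22 : (∑ k, R 2 k k 2) = R 2 0 0 2 + R 1 2 2 1 + R 2 3 3 2 := by
    rw [hEexp, hzd1, hR3 2 1 1 2]; ring
  have e33 : (∑ k, R 3 k k 3) = R 3 0 0 3 + R 1 3 3 1 + R 2 3 3 2 := by
    rw [hEexp, hzd1, hR3 3 1 1 3, hR3 3 2 2 3]; ring
  obtain ⟨A1l, A1r⟩ := abs_le.mp (hE 1 1)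
  obtain ⟨A2l, A2r⟩ := abs_le.mp (hE 2 2)
  obtain ⟨A3l, A3r⟩ := abs_le.mp (hE 3 3)
  obtain ⟨G1l, G1r⟩ := abs_le.mp (hRa00b 1 1)
  obtain ⟨G2l, G2r⟩ := abs_le.mp (hRa00b 2 2)
  obtain ⟨G3l, G3r⟩ := abs_le.mp (hRa00b 3 3)
  have hs12 : |R 1 2 2 1| ≤ K := by
    rw [abs_le]; constructor <;> [skip; skip] <;>
      (first | linarith [e11, e22, e33, hKdef])
  have hs13 : |R 1 3 3 1| ≤ K := by
    rw [abs_le]; constructor <;> (first | linarith [e11, e22, e33, hKdef])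
  have hs23 : |R 2 3 3 2| ≤ K := by
    rw [abs_le]; constructor <;> (first | linarith [e11, e22, e33, hKdef])
  -- mixed-type bounds
  have hmix : ∀ a b e : Fin 4, (∑ k, R a k k b) = R a 0 0 b + R a e e b → |R a e e b| ≤ K := by
    intro a b e he
    obtain ⟨Xl, Xr⟩ := abs_le.mp (hE a b)
    obtain ⟨Yl, Yr⟩ := abs_le.mp (hRa00b a b)
    rw [abs_le]; constructor <;> linarith [hKdef]
  have hm213 : |R 2 1 1 3| ≤ K := by
    refine hmix 2 3 1 ?_
    rw [hEexp, hzd1, hzd2]; ring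
  have hm312 : |R 3 1 1 2| ≤ K := by
    refine hmix 3 2 1 ?_
    rw [hEexp, hzd1, hzd2]; ring
  have hm123 : |R 1 2 2 3| ≤ K := by
    refine hmix 1 3 2 ?_
    rw [hEexp, hzd1, hzd2]; ring
  have hm321 : |R 3 2 2 1| ≤ K := by
    refine hmix 3 1 2 ?_
    rw [hEexp, hzd1, hzd2]; ring
  have hm132 : |R 1 3 3 2| ≤ K := by
    refine hmix 1 2 3 ?_
    rw [hEexp, hzd1, hzd2]; ring
  have hm231 : |R 2 3 3 1| ≤ K := by
    refine hmix 2 1 3 ?_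
    rw [hEexp, hzd1, hzd2]; ring
  -- master componentwise bound
  have hmain : ∀ i j k l, |R i j k l| ≤ K := by
    intro i j k l
    fin_cases i <;> fin_cases j <;> fin_cases k <;> fin_cases l <;>
      first
        | exact hdiag1 _ _ _
        | exact hdiag2 _ _ _
        | exact hz0 _ _ _ _ (by decide)
        | exact hs12 | exact hs13 | exact hs23
        | exact hm213 | exact hm312 | exact hm123
        | exact hm321 | exact hm132 | exact hm231
        | (rw [habs1]; first
            | exact hs12 | exact hs13 | exact hs23
            | exact hm213 | exact hm312 | exact hm123
            | exact hm321 | exact hm132 | exact hm231)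
        | (rw [habs2]; first
            | exact hs12 | exact hs13 | exact hs23
            | exact hm213 | exact hm312 | exact hm123
            | exact hm321 | exact hm132 | exact hm231)
        | (rw [habs1, habs2]; first
            | exact hs12 | exact hs13 | exact hs23
            | exact hm213 | exact hm312 | exact hm123
            | exact hm321 | exact hm132 | exact hm231)
  -- assembly
  have hRnorm : (∑ i, ∑ j, ∑ k, ∑ l, R i j k l ^ 2) = ∑ i, ∑ j, ∑ k, ∑ l, Rm i j k l ^ 2 := by
    simp only [hRdef]
    exact MW_col4 hcol Rm
  have hterm : ∀ i j k l, R i j k l ^ 2 ≤ K ^ 2 := by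
    intro i j k l
    rw [← sq_abs]
    exact pow_le_pow_left₀ (abs_nonneg _) (hmain i j k l) 2
  have hbound : (∑ i, ∑ j, ∑ k, ∑ l, R i j k l ^ 2) ≤ 256 * K ^ 2 := by
    refine le_trans (Finset.sum_le_sum fun i _ => Finset.sum_le_sum fun j _ =>
      Finset.sum_le_sum fun k _ => Finset.sum_le_sum fun l _ => hterm i j k l) ?_
    simp [Finset.sum_const, Finset.card_univ]
    ring_nf
    norm_num
  calc Real.sqrt (∑ i, ∑ j, ∑ k, ∑ l, Rm i j k l ^ 2)
      = Real.sqrt (∑ i, ∑ j, ∑ k, ∑ l, R i j k l ^ 2) := by rw [hRnorm]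
    _ ≤ Real.sqrt (256 * K ^ 2) := Real.sqrt_le_sqrt hbound
    _ = 16 * K := by
        rw [show (256:ℝ) * K ^ 2 = (16 * K) ^ 2 by ring, Real.sqrt_sq (by linarith)]
    _ ≤ 96 * (NR + β) := by rw [hKdef]; linarith
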